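/- For any two distinct positive integers r and s, there exists exactly one sequence taking values in {r, s} that begins with r and equals the sequence of its own run lengths (a run being a maximal block of consecutive equal symbols). This sequence is the generalised Kolakoski sequence K(r,s). -/

import Mathlib

/-- Sum of the first `m` letters of `A` (indices `0, …, m-1`), i.e. `A₁ + ⋯ + A_m`
in 1-indexed notation. -/
def psum (A : ℕ → ℕ) (m : ℕ) : ℕ := ∑ i ∈ Finset.range m, A i

/-- `A` equals the sequence of its own run lengths: the `m`-th run of `A` occupies
exactly the positions in `[psum A m, psum A (m+1))` (hence has length `A m`);
`A` is constant on each such block, and consecutive blocks carry different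
symbols (which is exactly maximality of the runs). -/
def IsRunSelf (A : ℕ → ℕ) : Prop :=
  ∀ m : ℕ,
    (∀ i : ℕ, psum A m ≤ i → i < psum A (m + 1) → A i = A (psum A m)) ∧
    A (psum A m) ≠ A (psum A (m + 1))

/-- The generalised Kolakoski sequence `K(r,s)`, 0-indexed: it takes values in
`{r, s}`, starts with `r`, and equals the sequence of its own run lengths. -/
def IsGenKolakoski (r s : ℕ) (A : ℕ → ℕ) : Prop :=
  (∀ n, A n = r ∨ A n = s) ∧ A 0 = r ∧ IsRunSelf A

lemma psum_succ (A : ℕ → ℕ) (m : ℕ) : psum A (m+1) = psum A m + A m :=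
  Finset.sum_range_succ A m

lemma findGreatest_congr' {P Q : ℕ → Prop} [DecidablePred P] [DecidablePred Q] :
    ∀ n, (∀ m ≤ n, (P m ↔ Q m)) → Nat.findGreatest P n = Nat.findGreatest Q n := by
  intro n
  induction n with
  | zero => intro _; rfl
  | succ n ih =>
    intro h
    rw [Nat.findGreatest, Nat.findGreatest, ih (fun m hm => h m (by omega))]
    by_cases hp : P (n+1)
    · rw [if_pos hp, if_pos ((h (n+1) le_rfl).mp hp)]
    · rw [if_neg hp, if_neg (fun hq => hp ((h (n+1) le_rfl).mpr hq))]

def kolPre (r s : ℕ) : ℕ → List ℕ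
  | 0 => []
  | n + 1 =>
    (kolPre r s n) ++
      [if Even (Nat.findGreatest (fun m => ((kolPre r s n).take m).sum ≤ n) n) then r else s]

def kol (r s i : ℕ) : ℕ := (kolPre r s (i+1)).getD i 0

lemma kolPre_length (r s n : ℕ) : (kolPre r s n).length = n := by
  induction n with
  | zero => rfl
  | succ n ih => simp [kolPre, ih]

lemma kolPre_getD (r s : ℕ) : ∀ n i, i < n → (kolPre r s n).getD i 0 = kol r s i := by
  intro n
  induction n with
  | zero => intro i hi; omega
  | succ n ih =>
    intro i hi
    rcases Nat.lt_or_ge i n with h | h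
    · rw [kolPre, List.getD_append _ _ _ _ (by rw [kolPre_length]; exact h), ih i h]
    · have : i = n := by omega
      subst this
      rfl

lemma psum_kol_take (r s : ℕ) : ∀ m n, m ≤ n →
    psum (kol r s) m = ((kolPre r s n).take m).sum := by
  intro m
  induction m with
  | zero => intro n _; simp [psum]
  | succ m ih =>
    intro n h
    have hm : m < (kolPre r s n).length := by rw [kolPre_length]; omega
    rw [psum_succ, ih n (by omega), List.sum_take_succ _ m hm]
    congr 1
    rw [← kolPre_getD r s n m (by omega)]
    simp [List.getD_eq_getElem?_getD, List.getElem?_eq_getElem hm]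

lemma kol_eq (r s i : ℕ) :
    kol r s i = if Even (Nat.findGreatest (fun m => psum (kol r s) m ≤ i) i) then r else s := by
  have h1 : kol r s i =
      if Even (Nat.findGreatest (fun m => ((kolPre r s i).take m).sum ≤ i) i) then r else s := by
    show (kolPre r s (i+1)).getD i 0 = _
    rw [kolPre]
    rw [List.getD_append_right _ _ _ _ (by rw [kolPre_length])]
    simp [kolPre_length]
  have h2 := findGreatest_congr' (P := fun m => ((kolPre r s i).take m).sum ≤ i)
    (Q := fun m => psum (kol r s) m ≤ i) i
    (fun m hm => by rw [psum_kol_take r s m i hm])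
  rw [h1, h2]

section Main
variable (r s : ℕ) (hr : 0 < r) (hs : 0 < s) (hrs : r ≠ s)

-- generic lemmas about any Kolakoski sequence
variable {A : ℕ → ℕ}

lemma pos_of_mem (hr : 0 < r) (hs : 0 < s) (hA : ∀ n, A n = r ∨ A n = s) : ∀ n, 0 < A n := by
  intro n; rcases hA n with h | h <;> omega

lemma psum_lt (hpos : ∀ n, 0 < A n) (m : ℕ) : psum A m < psum A (m+1) := by
  rw [psum_succ]; have := hpos m; omega

lemma le_psum (hpos : ∀ n, 0 < A n) : ∀ m, m ≤ psum A m := by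
  intro m
  induction m with
  | zero => simp [psum]
  | succ m ih => have := psum_lt (A := A) hpos m; omega

lemma psum_mono (hpos : ∀ n, 0 < A n) : StrictMono (psum A) :=
  strictMono_nat_of_lt_succ (psum_lt hpos)

/-- run index of `i` -/
lemma findGreatest_run (hpos : ∀ n, 0 < A n) {m i : ℕ}
    (h1 : psum A m ≤ i) (h2 : i < psum A (m+1)) :
    Nat.findGreatest (fun t => psum A t ≤ i) i = m := by
  rw [Nat.findGreatest_eq_iff]
  refine ⟨le_trans (le_psum hpos m) h1, fun _ => h1, ?_⟩
  intro n hn _ hPn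
  have : psum A (m+1) ≤ psum A n := (psum_mono hpos).monotone hn
  omega

/-- every index lies in some run -/
lemma exists_run (hpos : ∀ n, 0 < A n) (i : ℕ) :
    ∃ m, psum A m ≤ i ∧ i < psum A (m+1) := by
  set M := Nat.findGreatest (fun t => psum A t ≤ i) i with hM
  have hspec : psum A M ≤ i :=
    Nat.findGreatest_spec (P := fun t => psum A t ≤ i) (Nat.zero_le i) (by simp [psum])
  refine ⟨M, hspec, ?_⟩
  rcases Nat.lt_or_ge M i with h | h
  · by_contra hcon
    have hgr := Nat.findGreatest_is_greatest (P := fun t => psum A t ≤ i)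
      (n := i) (k := M+1) (by omega) (by omega)
    exact hgr (by omega)
  · have hMi : M ≤ i := Nat.findGreatest_le i
    have hMeq : M = i := by omega
    have hle := le_psum (A := A) hpos (M+1)
    omega

/-- symbols at run starts alternate -/
lemma run_start_symbol (hA : ∀ n, A n = r ∨ A n = s) (h0 : A 0 = r) (hrun : IsRunSelf A) :
    ∀ m, A (psum A m) = if Even m then r else s := by
  intro m
  induction m with
  | zero => simpa [psum] using h0
  | succ m ih =>
    have hne := (hrun m).2
    rw [ih] at hne
    by_cases hev : Even m
    · have h1 : ¬ Even (m+1) := by simp [Nat.even_add_one, hev]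
      rw [if_neg h1]
      rw [if_pos hev] at hne
      rcases hA (psum A (m+1)) with h | h
      · exact absurd h (fun e => hne e.symm)
      · exact h
    · have h1 : Even (m+1) := by simp [Nat.even_add_one, hev]
      rw [if_pos h1]
      rw [if_neg hev] at hne
      rcases hA (psum A (m+1)) with h | h
      · exact h
      · exact absurd h (fun e => hne e.symm)

/-- canonical form of any Kolakoski sequence -/
lemma canonical (hr : 0 < r) (hs : 0 < s) (hA : ∀ n, A n = r ∨ A n = s) (h0 : A 0 = r) (hrun : IsRunSelf A) (i : ℕ) :
    A i = if Even (Nat.findGreatest (fun t => psum A t ≤ i) i) then r else s := by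
  have hpos := pos_of_mem r s hr hs hA
  obtain ⟨m, h1, h2⟩ := exists_run hpos i
  rw [findGreatest_run hpos h1 h2, (hrun m).1 i h1 h2,
    run_start_symbol r s hA h0 hrun m]

end Main

/-- For any two distinct positive integers `r` and `s`, there
is exactly one sequence over `{r, s}` beginning with `r` that equals the
sequence of its own run lengths. -/
theorem genKolakoski_exists_unique (r s : ℕ) (hr : 0 < r) (hs : 0 < s)
    (hrs : r ≠ s) : ∃! A : ℕ → ℕ, IsGenKolakoski r s A := by
  set A := kol r s with hA
  have hmem : ∀ n, A n = r ∨ A n = s := by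
    intro n; rw [hA, kol_eq]; split
    · exact Or.inl rfl
    · exact Or.inr rfl
  have hpos : ∀ n, 0 < A n := pos_of_mem r s hr hs hmem
  have hrun_val : ∀ m i, psum A m ≤ i → i < psum A (m+1) →
      A i = if Even m then r else s := by
    intro m i h1 h2
    rw [hA, kol_eq, ← hA, findGreatest_run hpos h1 h2]
  have h0 : A 0 = r := by
    have := hrun_val 0 0 (by simp [psum]) (by have := psum_lt (A := A) hpos 0; simp [psum] at *; omega)
    simpa using this
  have hrun : IsRunSelf A := by
    intro m
    have hs1 : A (psum A m) = if Even m then r else s :=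
      hrun_val m (psum A m) le_rfl (psum_lt hpos m)
    have hs2 : A (psum A (m+1)) = if Even (m+1) then r else s :=
      hrun_val (m+1) (psum A (m+1)) le_rfl (psum_lt hpos (m+1))
    constructor
    · intro i h1 h2
      rw [hrun_val m i h1 h2, hs1]
    · rw [hs1, hs2]
      by_cases hev : Even m <;> simp [Nat.even_add_one, hev]
      · exact hrs
      · exact fun e => hrs e.symm
  refine ⟨A, ⟨hmem, h0, hrun⟩, ?_⟩
  intro B hB
  obtain ⟨hBmem, hB0, hBrun⟩ := hB
  have key : ∀ i, B i = A i := by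
    intro i
    induction i using Nat.strong_induction_on with
    | _ i ih =>
      have hps : ∀ m, m ≤ i → psum B m = psum A m := by
        intro m hm
        refine Finset.sum_congr rfl (fun k hk => ?_)
        rw [Finset.mem_range] at hk
        exact ih k (by omega)
      rw [canonical r s hr hs hBmem hB0 hBrun i,
        canonical r s hr hs hmem h0 hrun i,
        findGreatest_congr' (P := fun t => psum B t ≤ i) (Q := fun t => psum A t ≤ i) i
          (fun m hm => by rw [hps m hm])]
  funext i
  exact key i
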